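/- Let V be a finite set of nodes and l, d, m natural numbers. Fix: node features x : V → (Fin l → ℝ); positional encodings p : V → (Fin d → ℝ); a fixed vector λ : Fin d → ℝ; functions φ : Fin m → ((Fin d → ℝ) → (Fin d → ℝ)); matrices W : Matrix (Fin d) (Fin l) ℝ, B : Matrix (Fin l) (Fin d) ℝ, W_z, W_h : Matrix (Fin l) (Fin l) ℝ. For a node u define the d × m matrices A_u with i-th column φ i λ ⊙ (W · x u) and C_u with i-th column φ i λ ⊙ p u (⊙ is elementwise product of vectors in Fin d → ℝ); define a_u = B (A_u ⊙ C_u) (elementwise product of matrices followed by matrix multiplication), z_u = σ ∘ (W_z · x u) with σ(t) = 1/(1 + exp(-t)) applied entrywise, h̃_u = W_h · x u, and h_u = ( ∑_{v ∈ V} ⟪a_u, a_v⟫ ) • (z_u ⊙ h̃_u), where ⟪M, N⟫ = ∑_{i,j} M i j · N i j is the vectorized (Frobenius) inner product. Then for every permutation σ of V, if h' is computed by the same formulas from the permuted inputs x' = x ∘ σ⁻¹ and p' = p ∘ σ⁻¹ (with λ, φ, W, B, W_z, W_h unchanged), then h'_{σ(u)} = h_u for every node u. -/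

import Mathlib

noncomputable section

/-- The logistic sigmoid `σ(t) = 1/(1 + exp(-t))`. -/
def sigmoid (t : ℝ) : ℝ := 1 / (1 + Real.exp (-t))

/-- Feature component `A_u`: the `d × m` matrix whose `j`-th column is
`φ j λ ⊙ (W · x_u)` (elementwise product of vectors). -/
def featComp {l d m : ℕ} (lam : Fin d → ℝ)
    (φ : Fin m → (Fin d → ℝ) → (Fin d → ℝ))
    (W : Matrix (Fin d) (Fin l) ℝ) (xu : Fin l → ℝ) :
    Matrix (Fin d) (Fin m) ℝ :=
  Matrix.of fun i j => φ j lam i * W.mulVec xu i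

/-- Positional component `C_u`: the `d × m` matrix whose `j`-th column is
`φ j λ ⊙ p_u`. -/
def posComp {d m : ℕ} (lam : Fin d → ℝ)
    (φ : Fin m → (Fin d → ℝ) → (Fin d → ℝ)) (pu : Fin d → ℝ) :
    Matrix (Fin d) (Fin m) ℝ :=
  Matrix.of fun i j => φ j lam i * pu i

/-- Node embedding `a_u = B (A_u ⊙ C_u)`: elementwise (Hadamard) product of the
feature and positional components, followed by multiplication by `B`. -/
def nodeEmb {l d m : ℕ} (lam : Fin d → ℝ)
    (φ : Fin m → (Fin d → ℝ) → (Fin d → ℝ))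
    (W : Matrix (Fin d) (Fin l) ℝ) (B : Matrix (Fin l) (Fin d) ℝ)
    (xu : Fin l → ℝ) (pu : Fin d → ℝ) : Matrix (Fin l) (Fin m) ℝ :=
  B * (Matrix.of fun i j =>
    featComp lam φ W xu i j * posComp lam φ pu i j)

/-- Vectorized (Frobenius) inner product `⟪M, N⟫ = ∑_{i,j} M i j · N i j`. -/
def frobInner {l m : ℕ} (M N : Matrix (Fin l) (Fin m) ℝ) : ℝ :=
  ∑ i, ∑ j, M i j * N i j

/-- GraphMinNet output
`h_u = (∑_{v ∈ V} ⟪a_u, a_v⟫) • (z_u ⊙ h̃_u)` with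
`z_u = σ ∘ (W_z · x_u)` (entrywise logistic sigmoid) and `h̃_u = W_h · x_u`. -/
def hOut {V : Type*} [Fintype V] {l d m : ℕ} (lam : Fin d → ℝ)
    (φ : Fin m → (Fin d → ℝ) → (Fin d → ℝ))
    (W : Matrix (Fin d) (Fin l) ℝ) (B : Matrix (Fin l) (Fin d) ℝ)
    (Wz Wh : Matrix (Fin l) (Fin l) ℝ)
    (x : V → Fin l → ℝ) (p : V → Fin d → ℝ) (u : V) : Fin l → ℝ :=
  (∑ v : V, frobInner (nodeEmb lam φ W B (x u) (p u))
      (nodeEmb lam φ W B (x v) (p v))) •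
    fun k => sigmoid (Wz.mulVec (x u) k) * Wh.mulVec (x u) k

/-- Permutation equivariance of GraphMinNet (Proposition 1, Type-3 inner
product): computing the output from the permuted inputs `x ∘ σ⁻¹`, `p ∘ σ⁻¹`
at node `σ u` gives the same result as computing it from the original inputs
at node `u`. -/
theorem graphMinNet_permutation_equivariant {V : Type*} [Fintype V]
    {l d m : ℕ} (lam : Fin d → ℝ)
    (φ : Fin m → (Fin d → ℝ) → (Fin d → ℝ))
    (W : Matrix (Fin d) (Fin l) ℝ) (B : Matrix (Fin l) (Fin d) ℝ)
    (Wz Wh : Matrix (Fin l) (Fin l) ℝ)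
    (x : V → Fin l → ℝ) (p : V → Fin d → ℝ)
    (σ : Equiv.Perm V) (u : V) :
    hOut lam φ W B Wz Wh (x ∘ ⇑σ⁻¹) (p ∘ ⇑σ⁻¹) (σ u)
      = hOut lam φ W B Wz Wh x p u := by
  unfold hOut
  simp only [Function.comp_apply, Equiv.Perm.coe_inv, Equiv.symm_apply_apply]
  congr 1
  exact Equiv.sum_comp σ⁻¹ fun v => frobInner (nodeEmb lam φ W B (x u) (p u)) (nodeEmb lam φ W B (x v) (p v))
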